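/- Let T ~ St(t|0, I, ν) be standard n-dimensional Student's t and k ∈ ℕⁿ with Σkᵢ < ν. Then the mixed absolute moment E[∏ |Tᵢ|^{kᵢ}] = ν^{(Σkᵢ)/2} · Γ((ν-Σkᵢ)/2)/Γ(ν/2) · ∏ᵢ Γ((kᵢ+1)/2)/√π. -/

import Mathlib

open Real MeasureTheory Finset Set

lemma nat_neg_one_lt (k : ℕ) : (-1:ℝ) < (k:ℝ) :=
  neg_one_lt_zero.trans_le (Nat.cast_nonneg k)

lemma gauss_int {k : ℕ} {b : ℝ} (hb : 0 < b) :
    Integrable (fun u : ℝ => |u| ^ k * Real.exp (-b * u ^ 2)) := by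
  have h := (integrable_rpow_mul_exp_neg_mul_sq hb (nat_neg_one_lt k)).abs
  refine h.congr (Filter.Eventually.of_forall fun u => ?_)
  simp [Real.rpow_natCast, abs_mul, abs_pow, abs_of_pos, Real.exp_pos]

lemma gauss_val {k : ℕ} {b : ℝ} (hb : 0 < b) :
    ∫ u : ℝ, |u| ^ k * Real.exp (-b * u ^ 2)
      = b ^ (-(((k:ℝ) + 1) / 2)) * Real.Gamma (((k:ℝ) + 1) / 2) := by
  have h1 : ∫ u : ℝ, |u| ^ k * Real.exp (-b * u ^ 2)
      = ∫ u : ℝ, (fun x : ℝ => x ^ k * Real.exp (-b * x ^ 2)) |u| := by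
    congr 1; funext u; simp [sq_abs]
  rw [h1, integral_comp_abs (f := fun x : ℝ => x ^ k * Real.exp (-b * x ^ 2))]
  have h2 : ∫ x in Ioi (0:ℝ), x ^ k * Real.exp (-b * x ^ 2)
      = ∫ x in Ioi (0:ℝ), x ^ (k:ℝ) * Real.exp (-b * x ^ (2:ℝ)) := by
    refine setIntegral_congr_fun measurableSet_Ioi (fun x hx => ?_)
    rw [Real.rpow_natCast, show x ^ (2:ℝ) = x ^ (2:ℕ) from Real.rpow_two x ▸ rfl]
  rw [h2, integral_rpow_mul_exp_neg_mul_rpow two_pos (nat_neg_one_lt k) hb]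
  rw [neg_div]
  ring

lemma gamma_rep {c p : ℝ} (hc : 0 < c) (hp : 0 < p) :
    c ^ (-p) = (Real.Gamma p)⁻¹ * ∫ s in Ioi (0:ℝ), s ^ (p - 1) * Real.exp (-c * s) := by
  have h : ∫ s in Ioi (0:ℝ), s ^ (p - 1) * Real.exp (-c * s)
      = ∫ s in Ioi (0:ℝ), s ^ (p - 1) * Real.exp (-c * s ^ (1:ℝ)) := by
    simp [Real.rpow_one]
  rw [h, integral_rpow_mul_exp_neg_mul_rpow one_pos (by linarith) hc]
  have hΓ : Real.Gamma p ≠ 0 := (Real.Gamma_pos_of_pos hp).ne'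
  rw [sub_add_cancel]
  field_simp

lemma gamma_rep_int {c p : ℝ} (hc : 0 < c) (hp : 0 < p) :
    IntegrableOn (fun s : ℝ => s ^ (p - 1) * Real.exp (-c * s)) (Ioi 0) := by
  have h := integrableOn_rpow_mul_exp_neg_mul_rpow (p := 1) (s := p - 1) (by linarith) one_pos hc
  refine h.congr_fun (fun s _ => ?_) measurableSet_Ioi
  beta_reduce; rw [Real.rpow_one]

theorem multivariate_student_t_abs_moments (n : ℕ) (ν : ℝ) (hν : 0 < ν)
    (k : Fin n → ℕ) (hsum : ((∑ i, k i : ℕ) : ℝ) < ν) :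
    ∫ t : Fin n → ℝ, (∏ i, |t i| ^ k i) *
        (Real.Gamma ((ν + n)/2) / Real.Gamma (ν/2) * (ν * π) ^ (-(n:ℝ)/2) *
          (1 + (∑ i, t i ^ 2) / ν) ^ (-((ν + n)/2)))
      = ν ^ (((∑ i, k i : ℕ) : ℝ)/2) * (Real.Gamma ((ν - (∑ i, k i : ℕ))/2) / Real.Gamma (ν/2)) *
          ∏ i, (Real.Gamma (((k i : ℝ) + 1)/2) / Real.sqrt π) := by
  have hn0 : (0:ℝ) ≤ n := Nat.cast_nonneg n
  set K : ℝ := ((∑ i, k i : ℕ) : ℝ) with hK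
  have hK0 : (0:ℝ) ≤ K := Nat.cast_nonneg _
  set p : ℝ := (ν + n) / 2 with hpdef
  have hp : 0 < p := by rw [hpdef]; linarith
  set q : ℝ := (ν - K) / 2 with hqdef
  have hq : 0 < q := by rw [hqdef]; linarith
  have hΓp : 0 < Real.Gamma p := Real.Gamma_pos_of_pos hp
  -- notation for the density parts
  set P : (Fin n → ℝ) → ℝ := fun t => ∏ i, |t i| ^ k i with hPdef
  have hPnn : ∀ t, 0 ≤ P t := fun t => Finset.prod_nonneg fun i _ => pow_nonneg (abs_nonneg _) _
  have hbase : ∀ t : Fin n → ℝ, 0 < 1 + (∑ i, t i ^ 2) / ν := by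
    intro t
    have : 0 ≤ ∑ i, t i ^ 2 := Finset.sum_nonneg fun i _ => sq_nonneg _
    positivity
  set F : (Fin n → ℝ) → ℝ := fun t => P t * (1 + (∑ i, t i ^ 2) / ν) ^ (-p) with hFdef
  have hFnn : ∀ t, 0 ≤ F t := fun t => mul_nonneg (hPnn t) (Real.rpow_nonneg (hbase t).le _)
  set Φ : (Fin n → ℝ) → ℝ → ℝ := fun t s =>
    ((Real.Gamma p)⁻¹ * P t) * (s ^ (p - 1) * Real.exp (-(1 + (∑ i, t i ^ 2) / ν) * s)) with hΦdef
  -- Step A : pointwise Gamma representation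
  have stepA : ∀ t, ENNReal.ofReal (F t) = ∫⁻ s in Ioi (0:ℝ), ENNReal.ofReal (Φ t s) := by
    intro t
    have h1 : F t = ∫ s in Ioi (0:ℝ), Φ t s := by
      rw [hFdef]
      simp only
      rw [gamma_rep (hbase t) hp, hΦdef]
      simp only
      rw [MeasureTheory.integral_const_mul]
      ring
    rw [h1]
    refine ofReal_integral_eq_lintegral_ofReal ?_ ?_
    · exact ((gamma_rep_int (hbase t) hp).const_mul _)
    · refine (ae_restrict_iff' measurableSet_Ioi).mpr (Filter.Eventually.of_forall fun s hs => ?_)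
      have hs' : (0:ℝ) < s := hs
      exact mul_nonneg (mul_nonneg (inv_nonneg.mpr hΓp.le) (hPnn t))
        (mul_nonneg (Real.rpow_nonneg hs'.le _) (Real.exp_pos _).le)
  -- measurability of the joint integrand
  have hPmeas : Measurable P := by
    rw [hPdef]
    exact Finset.measurable_prod _ fun i _ => ((measurable_pi_apply i).abs).pow_const _
  have hjoint : Measurable fun z : (Fin n → ℝ) × ℝ => ENNReal.ofReal (Φ z.1 z.2) := by
    refine Measurable.ennreal_ofReal ?_
    rw [hΦdef]
    refine ((measurable_const.mul (hPmeas.comp measurable_fst)).mul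
      ((measurable_snd.pow_const _).mul ?_))
    fun_prop
  have hswap := MeasureTheory.lintegral_lintegral_swap (μ := (volume : Measure (Fin n → ℝ)))
    (ν := volume.restrict (Ioi (0:ℝ)))
    (f := fun (t : Fin n → ℝ) (s : ℝ) => ENNReal.ofReal (Φ t s)) hjoint.aemeasurable
  -- the Gamma factors are positive
  have hΓk : ∀ i : Fin n, 0 < Real.Gamma (((k i : ℝ) + 1) / 2) := fun i =>
    Real.Gamma_pos_of_pos (by positivity)
  -- inner integral over t for fixed s > 0
  have hinner : ∀ s ∈ Ioi (0:ℝ), ∫⁻ t : Fin n → ℝ, ENNReal.ofReal (Φ t s)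
      = ENNReal.ofReal (((Real.Gamma p)⁻¹ * (s ^ (p - 1) * Real.exp (-s))) *
          ((s / ν) ^ (-((K + (n:ℝ)) / 2)) * ∏ i, Real.Gamma (((k i : ℝ) + 1) / 2))) := by
    intro s hs
    have hs' : (0:ℝ) < s := hs
    have hb : 0 < s / ν := div_pos hs' hν
    have hfun : ∀ t, Φ t s = ((Real.Gamma p)⁻¹ * (s ^ (p - 1) * Real.exp (-s))) *
        ∏ i, (|t i| ^ k i * Real.exp (-(s / ν) * t i ^ 2)) := by
      intro t
      have e1 : Real.exp (-(1 + (∑ i, t i ^ 2) / ν) * s)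
          = Real.exp (-s) * Real.exp (-(s / ν) * ∑ i, t i ^ 2) := by
        rw [← Real.exp_add]; congr 1; field_simp; ring
      have e2 : Real.exp (-(s / ν) * ∑ i, t i ^ 2)
          = ∏ i, Real.exp (-(s / ν) * t i ^ 2) := by
        rw [← Real.exp_sum]; congr 1; rw [Finset.mul_sum]
      rw [hΦdef]; simp only
      rw [e1, e2, hPdef]; simp only
      rw [Finset.prod_mul_distrib]
      ring
    have hGint : Integrable (fun t : Fin n → ℝ =>
        ∏ i, (|t i| ^ k i * Real.exp (-(s / ν) * t i ^ 2))) :=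
      Integrable.fintype_prod (E := ℝ) (fun i => gauss_int hb)
    have hcnn : 0 ≤ (Real.Gamma p)⁻¹ * (s ^ (p - 1) * Real.exp (-s)) :=
      mul_nonneg (inv_nonneg.mpr hΓp.le)
        (mul_nonneg (Real.rpow_nonneg hs'.le _) (Real.exp_pos _).le)
    calc ∫⁻ t : Fin n → ℝ, ENNReal.ofReal (Φ t s)
        = ∫⁻ t : Fin n → ℝ, ENNReal.ofReal
            (((Real.Gamma p)⁻¹ * (s ^ (p - 1) * Real.exp (-s))) *
              ∏ i, (|t i| ^ k i * Real.exp (-(s / ν) * t i ^ 2))) :=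
          lintegral_congr fun t => by rw [hfun t]
      _ = ENNReal.ofReal (∫ t : Fin n → ℝ,
            ((Real.Gamma p)⁻¹ * (s ^ (p - 1) * Real.exp (-s))) *
              ∏ i, (|t i| ^ k i * Real.exp (-(s / ν) * t i ^ 2))) := by
          refine (ofReal_integral_eq_lintegral_ofReal (hGint.const_mul _)
            (Filter.Eventually.of_forall fun t => ?_)).symm
          exact mul_nonneg hcnn (Finset.prod_nonneg fun i _ =>
            mul_nonneg (pow_nonneg (abs_nonneg _) _) (Real.exp_pos _).le)
      _ = ENNReal.ofReal (((Real.Gamma p)⁻¹ * (s ^ (p - 1) * Real.exp (-s))) *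
            ((s / ν) ^ (-((K + (n:ℝ)) / 2)) * ∏ i, Real.Gamma (((k i : ℝ) + 1) / 2))) := by
          rw [MeasureTheory.integral_const_mul]
          congr 1
          rw [MeasureTheory.integral_fintype_prod_volume_eq_prod (𝕜 := ℝ)
            (f := fun i (u : ℝ) => |u| ^ k i * Real.exp (-(s / ν) * u ^ 2))]
          congr 1
          have : ∀ i : Fin n, ∫ u : ℝ, |u| ^ k i * Real.exp (-(s / ν) * u ^ 2)
              = (s / ν) ^ (-(((k i : ℝ) + 1) / 2)) * Real.Gamma (((k i : ℝ) + 1) / 2) :=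
            fun i => gauss_val hb
          rw [Finset.prod_congr rfl fun i _ => this i, Finset.prod_mul_distrib,
            ← Real.rpow_sum_of_pos hb]
          congr 2
          have h2 : ∑ i : Fin n, ((k i : ℝ) + 1) = K + n := by
            rw [hK]; push_cast; rw [Finset.sum_add_distrib]; simp
          have h1 : ∑ i : Fin n, (-(((k i : ℝ) + 1) / 2))
              = (-(1/2)) * ∑ i : Fin n, ((k i : ℝ) + 1) := by
            rw [Finset.mul_sum]; exact Finset.sum_congr rfl fun i _ => by ring
          rw [h1, h2]; ring
  -- collect: the lintegral of F
  have hΓq : 0 < Real.Gamma q := Real.Gamma_pos_of_pos hq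
  have hc0nn : 0 ≤ (Real.Gamma p)⁻¹ * ν ^ ((K + (n:ℝ)) / 2) *
      (∏ i, Real.Gamma (((k i : ℝ) + 1) / 2)) :=
    mul_nonneg (mul_nonneg (inv_nonneg.mpr hΓp.le) (Real.rpow_nonneg hν.le _))
      (Finset.prod_nonneg fun i _ => (hΓk i).le)
  have hL : ∫⁻ t : Fin n → ℝ, ENNReal.ofReal (F t)
      = ENNReal.ofReal (((Real.Gamma p)⁻¹ * ν ^ ((K + (n:ℝ)) / 2) *
          (∏ i, Real.Gamma (((k i : ℝ) + 1) / 2))) * Real.Gamma q) := by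
    calc ∫⁻ t : Fin n → ℝ, ENNReal.ofReal (F t)
        = ∫⁻ t : Fin n → ℝ, ∫⁻ s in Ioi (0:ℝ), ENNReal.ofReal (Φ t s) :=
          lintegral_congr stepA
      _ = ∫⁻ s in Ioi (0:ℝ), ∫⁻ t : Fin n → ℝ, ENNReal.ofReal (Φ t s) := hswap
      _ = ∫⁻ s in Ioi (0:ℝ), ENNReal.ofReal
            (((Real.Gamma p)⁻¹ * ν ^ ((K + (n:ℝ)) / 2) *
              (∏ i, Real.Gamma (((k i : ℝ) + 1) / 2))) * (s ^ (q - 1) * Real.exp (-s))) := by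
          refine setLIntegral_congr_fun measurableSet_Ioi
            (fun s hs => ?_)
          rw [hinner s hs]
          congr 1
          have hs' : (0:ℝ) < s := hs
          have hd : (s / ν) ^ (-((K + (n:ℝ)) / 2))
              = s ^ (-((K + (n:ℝ)) / 2)) * ν ^ ((K + (n:ℝ)) / 2) := by
            rw [Real.div_rpow hs'.le hν.le, Real.rpow_neg hν.le, div_inv_eq_mul]
          have hs2 : s ^ (q - 1) = s ^ (p - 1) * s ^ (-((K + (n:ℝ)) / 2)) := by
            rw [← Real.rpow_add hs']; congr 1; rw [hqdef, hpdef]; ring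
          rw [hd, hs2]; ring
      _ = ENNReal.ofReal (((Real.Gamma p)⁻¹ * ν ^ ((K + (n:ℝ)) / 2) *
            (∏ i, Real.Gamma (((k i : ℝ) + 1) / 2))) *
            ∫ s in Ioi (0:ℝ), s ^ (q - 1) * Real.exp (-s)) := by
          rw [← MeasureTheory.integral_const_mul]
          refine (ofReal_integral_eq_lintegral_ofReal ?_ ?_).symm
          · have h := gamma_rep_int one_pos hq
            have h2 : IntegrableOn (fun s : ℝ => s ^ (q - 1) * Real.exp (-s)) (Ioi 0) :=
              h.congr_fun (fun s _ => by beta_reduce; rw [neg_one_mul]) measurableSet_Ioi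
            exact h2.const_mul _
          · refine (ae_restrict_iff' measurableSet_Ioi).mpr
              (Filter.Eventually.of_forall fun s hs => ?_)
            have hs' : (0:ℝ) < s := hs
            exact mul_nonneg hc0nn
              (mul_nonneg (Real.rpow_nonneg hs'.le _) (Real.exp_pos _).le)
      _ = ENNReal.ofReal (((Real.Gamma p)⁻¹ * ν ^ ((K + (n:ℝ)) / 2) *
            (∏ i, Real.Gamma (((k i : ℝ) + 1) / 2))) * Real.Gamma q) := by
          congr 1
          rw [Real.Gamma_eq_integral hq]
          congr 1
          refine setIntegral_congr_fun measurableSet_Ioi (fun s hs => ?_)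
          rw [mul_comm]
  -- integrability and value of ∫ F
  have hFcont : Continuous F := by
    rw [hFdef]
    refine Continuous.mul ?_ ?_
    · rw [hPdef]
      exact continuous_finset_prod _ fun i _ => ((continuous_apply i).abs).pow _
    · refine Continuous.rpow_const ?_ (fun t => Or.inl (hbase t).ne')
      exact continuous_const.add ((continuous_finset_sum _ fun i _ =>
        (continuous_apply i).pow 2).div_const ν)
  have hFint : Integrable F := by
    refine ⟨hFcont.aestronglyMeasurable, ?_⟩
    rw [hasFiniteIntegral_iff_ofReal (Filter.Eventually.of_forall hFnn), hL]
    exact ENNReal.ofReal_lt_top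
  have hFval : ∫ t : Fin n → ℝ, F t
      = ((Real.Gamma p)⁻¹ * ν ^ ((K + (n:ℝ)) / 2) *
          (∏ i, Real.Gamma (((k i : ℝ) + 1) / 2))) * Real.Gamma q := by
    rw [MeasureTheory.integral_eq_lintegral_of_nonneg_ae
      (Filter.Eventually.of_forall hFnn) hFcont.aestronglyMeasurable, hL,
      ENNReal.toReal_ofReal (mul_nonneg hc0nn hΓq.le)]
  -- final computation
  have hrw : ∀ t : Fin n → ℝ, (∏ i, |t i| ^ k i) *
      (Real.Gamma p / Real.Gamma (ν/2) * (ν * π) ^ (-(n:ℝ)/2) *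
        (1 + (∑ i, t i ^ 2) / ν) ^ (-p))
      = (Real.Gamma p / Real.Gamma (ν/2) * (ν * π) ^ (-(n:ℝ)/2)) * F t := by
    intro t; rw [hFdef, hPdef]; ring
  calc ∫ t : Fin n → ℝ, (∏ i, |t i| ^ k i) *
        (Real.Gamma p / Real.Gamma (ν/2) * (ν * π) ^ (-(n:ℝ)/2) *
          (1 + (∑ i, t i ^ 2) / ν) ^ (-p))
      = ∫ t : Fin n → ℝ, (Real.Gamma p / Real.Gamma (ν/2) * (ν * π) ^ (-(n:ℝ)/2)) * F t := by
        simp_rw [hrw]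
    _ = (Real.Gamma p / Real.Gamma (ν/2) * (ν * π) ^ (-(n:ℝ)/2)) *
          (((Real.Gamma p)⁻¹ * ν ^ ((K + (n:ℝ)) / 2) *
            (∏ i, Real.Gamma (((k i : ℝ) + 1) / 2))) * Real.Gamma q) := by
        rw [MeasureTheory.integral_const_mul, hFval]
    _ = ν ^ (K/2) * (Real.Gamma q / Real.Gamma (ν/2)) *
          ∏ i, (Real.Gamma (((k i : ℝ) + 1)/2) / Real.sqrt π) := by
        have hΓν2 : 0 < Real.Gamma (ν/2) := Real.Gamma_pos_of_pos (by linarith)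
        have hsπ : 0 < Real.sqrt π := Real.sqrt_pos.mpr pi_pos
        rw [Real.mul_rpow hν.le pi_pos.le]
        have hπ : (π : ℝ) ^ (-(n:ℝ)/2) = ((Real.sqrt π) ^ n)⁻¹ := by
          rw [Real.sqrt_eq_rpow, ← Real.rpow_natCast (π ^ ((1:ℝ)/2)) n,
            ← Real.rpow_mul pi_pos.le, ← Real.rpow_neg pi_pos.le]
          congr 1; ring
        have hkey : ν ^ ((K + (n:ℝ)) / 2) = ν ^ (K/2) * ν ^ ((n:ℝ)/2) := by
          rw [← Real.rpow_add hν]; congr 1; ring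
        have hνn : ν ^ (-(n:ℝ)/2) = (ν ^ ((n:ℝ)/2))⁻¹ := by
          rw [← Real.rpow_neg hν.le]; congr 1; ring
        rw [hπ, hkey, hνn, Finset.prod_div_distrib, Finset.prod_const, card_univ,
          Fintype.card_fin]
        have hνp : (0:ℝ) < ν ^ ((n:ℝ)/2) := Real.rpow_pos_of_pos hν _
        field_simp
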